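/- Let C be closed and convex, x ∈ C, α > 0, ζ ∈ (0,1], and z(α) = x − αD⁻¹∇f(x). Then x is a stationary point of the problem min{f(y) : y ∈ C} (i.e., ⟨∇f(x), y − x⟩ ≥ 0 for all y ∈ C) if and only if x ∈ 𝒫_{C,ζ}^D(x, z(α)). -/

import Mathlib

open RealInnerProductSpace

abbrev EucSp (n : ℕ) := EuclideanSpace ℝ (Fin n)

noncomputable def dipr {n : ℕ} (D : Matrix (Fin n) (Fin n) ℝ) (x y : EucSp n) : ℝ :=
  ⟪(Matrix.toEuclideanLin D) x, y⟫

noncomputable def dnorm {n : ℕ} (D : Matrix (Fin n) (Fin n) ℝ) (x : EucSp n) : ℝ :=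
  Real.sqrt (dipr D x x)

/-- `p` is the exact projection of `v` onto `C` in the `D`-norm. -/
def IsDProj {n : ℕ} (D : Matrix (Fin n) (Fin n) ℝ) (C : Set (EucSp n)) (v p : EucSp n) : Prop :=
  p ∈ C ∧ ∀ z ∈ C, dnorm D (p - v) ≤ dnorm D (z - v)

theorem stmt10 {n : ℕ} (C : Set (EucSp n)) (hcl : IsClosed C) (hconv : Convex ℝ C)
    (D : Matrix (Fin n) (Fin n) ℝ) (hD : D.PosDef)
    (f : EucSp n → ℝ) (g : EucSp n → EucSp n) (hf : ∀ x, HasGradientAt f (g x) x)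
    (x : EucSp n) (hx : x ∈ C) (α : ℝ) (hα : 0 < α) (ζ : ℝ) (hζ : 0 < ζ ∧ ζ ≤ 1)
    (z : EucSp n) (hz : z = x - α • (Matrix.toEuclideanLin D⁻¹) (g x))
    (p : EucSp n) (hp : IsDProj D C z p) :
    (∀ y ∈ C, 0 ≤ ⟪g x, y - x⟫) ↔
      (dnorm D (x - z)) ^ 2 ≤
        ζ * (dnorm D (p - z)) ^ 2 + (1 - ζ) * (dnorm D (x - z)) ^ 2 := by
  obtain ⟨hζ0, hζ1⟩ := hζ
  have hpos : ∀ u : EucSp n, 0 ≤ dipr D u u := by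
    intro u
    have h := hD.posSemidef.dotProduct_mulVec_nonneg ((WithLp.equiv 2 (Fin n → ℝ)) u)
    simp only [star_trivial] at h
    simpa [dipr, Matrix.toEuclideanLin_apply, PiLp.inner_apply, dotProduct,
      mul_comm] using h
  have hsym : ∀ u v : EucSp n, dipr D u v = dipr D v u := by
    intro u v
    have hs := (Matrix.isHermitian_iff_isSymmetric.mp hD.isHermitian) u v
    rw [dipr, dipr, hs, real_inner_comm]
  have hsq : ∀ u : EucSp n, (dnorm D u) ^ 2 = dipr D u u := fun u => Real.sq_sqrt (hpos u)
  have haddl : ∀ u v w : EucSp n, dipr D (u + v) w = dipr D u w + dipr D v w := by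
    intro u v w; simp [dipr, map_add, inner_add_left]
  have hsmulr : ∀ (c : ℝ) (u v : EucSp n), dipr D u (c • v) = c * dipr D u v := by
    intro c u v; simp [dipr, inner_smul_right]
  have haddr : ∀ u v w : EucSp n, dipr D u (v + w) = dipr D u v + dipr D u w := by
    intro u v w; simp [dipr, inner_add_right]
  have hsmull : ∀ (c : ℝ) (u v : EucSp n), dipr D (c • u) v = c * dipr D u v := by
    intro c u v; rw [hsym, hsmulr, hsym]
  have hxz : x - z = α • (Matrix.toEuclideanLin D⁻¹) (g x) := by rw [hz]; abel
  have hDinv : Matrix.toEuclideanLin D (Matrix.toEuclideanLin D⁻¹ (g x)) = g x := by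
    have h : D * D⁻¹ = 1 :=
      Matrix.mul_nonsing_inv D (Matrix.isUnit_iff_isUnit_det D |>.mp hD.isUnit)
    apply (WithLp.equiv 2 _).injective
    simp [Matrix.ofLp_toEuclideanLin_apply, Matrix.mulVec_mulVec, h]
  have hDxz : ∀ v : EucSp n, dipr D (x - z) v = α * ⟪g x, v⟫ := by
    intro v
    rw [hxz, hsmull, dipr, hDinv]
  have expand : ∀ w : EucSp n, (dnorm D (w - z)) ^ 2 =
      (dnorm D (x - z)) ^ 2 + 2 * dipr D (x - z) (w - x) + dipr D (w - x) (w - x) := by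
    intro w
    have hw : w - z = (x - z) + (w - x) := by abel
    rw [hsq, hsq, hw]
    simp only [haddl, haddr]
    rw [hsym (w - x) (x - z)]
    ring
  constructor
  · intro hstat
    have h1 : 0 ≤ dipr D (x - z) (p - x) := by
      rw [hDxz]; exact mul_nonneg hα.le (hstat p hp.1)
    have h2 := expand p
    have h3 := hpos (p - x)
    nlinarith
  · intro h y hy
    have hxp2 : (dnorm D (x - z)) ^ 2 ≤ (dnorm D (p - z)) ^ 2 := by nlinarith
    have hmin : ∀ w ∈ C, (dnorm D (x - z)) ^ 2 ≤ (dnorm D (w - z)) ^ 2 := by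
      intro w hw
      refine hxp2.trans (pow_le_pow_left₀ (Real.sqrt_nonneg _) (hp.2 w hw) 2)
    set c := dipr D (x - z) (y - x) with hc_def
    set b := dipr D (y - x) (y - x) with hb_def
    have hb : 0 ≤ b := hpos _
    have hc : 0 ≤ c := by
      by_contra hc
      push_neg at hc
      set t := min 1 (-c / (b + 1)) with ht_def
      have ht0 : 0 < t := lt_min one_pos (div_pos (by linarith) (by linarith))
      have ht1 : t ≤ 1 := min_le_left _ _
      have htc : t ≤ -c / (b + 1) := min_le_right _ _
      have hwC : x + t • (y - x) ∈ C := by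
        have := hconv hx hy (by linarith : (0:ℝ) ≤ 1 - t) ht0.le (by ring)
        convert this using 1
        module
      have hle := hmin _ hwC
      rw [expand (x + t • (y - x))] at hle
      have e1 : dipr D (x - z) (x + t • (y - x) - x) = t * c := by
        rw [show x + t • (y - x) - x = t • (y - x) by abel, hsmulr]
      have e2 : dipr D (x + t • (y - x) - x) (x + t • (y - x) - x) = t * (t * b) := by
        rw [show x + t • (y - x) - x = t • (y - x) by abel, hsmulr, hsmull]
      rw [e1, e2] at hle
      have htb : t * (b + 1) ≤ -c := (le_div_iff₀ (by linarith)).mp htc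
      nlinarith
    have := hDxz (y - x)
    rw [← hc_def] at this
    nlinarith
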